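/- Let A be a symmetric negative-definite m×m real matrix with eigenvalues 0 > λ₁ ≥ ... ≥ λ_m, and let t₁ ≥ t₂. Then ∫_{-∞}^{t₂} |(e^{At₁} − e^{At₂}) e^{-As}|² ds ≤ (Tr(−A)/2)(t₁ − t₂)², where |·| denotes the Frobenius norm. -/

import Mathlib

open Matrix NormedSpace MeasureTheory

/-- The Frobenius norm of a real matrix. -/
noncomputable def frobNorm {m : ℕ} (B : Matrix (Fin m) (Fin m) ℝ) : ℝ :=
  Real.sqrt (∑ i, ∑ j, B i j ^ 2)


lemma frob_sq_conj {m : ℕ} (U : Matrix (Fin m) (Fin m) ℝ)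
    (hU1 : star U * U = 1) (d : Fin m → ℝ) :
    frobNorm (U * Matrix.diagonal d * star U) ^ 2 = ∑ i, d i ^ 2 := by
  have hcollapse : ∀ X : Matrix (Fin m) (Fin m) ℝ, star U * (U * X) = X := fun X => by
    rw [← Matrix.mul_assoc, hU1, Matrix.one_mul]
  set B := U * Matrix.diagonal d * star U with hB
  have hnn : 0 ≤ ∑ i, ∑ j, B i j ^ 2 :=
    Finset.sum_nonneg fun i _ => Finset.sum_nonneg fun j _ => sq_nonneg _
  rw [frobNorm, Real.sq_sqrt hnn]
  have key : (∑ i, ∑ j, B i j ^ 2) = Matrix.trace (B * star B) := by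
    simp [Matrix.trace, Matrix.mul_apply, Matrix.conjTranspose_apply, Matrix.diag, sq,
      mul_comm]
  have hsB : star B = U * (Matrix.diagonal d * star U) := by
    rw [hB, Matrix.star_mul, Matrix.star_mul, star_star, Matrix.star_eq_conjTranspose (Matrix.diagonal d),
      Matrix.diagonal_conjTranspose]
    simp only [star_trivial, Matrix.mul_assoc]
  have h2 : B * star B = U * (Matrix.diagonal d * Matrix.diagonal d * star U) := by
    rw [hsB, hB]
    simp only [Matrix.mul_assoc, hcollapse]
  rw [key, h2, Matrix.trace_mul_comm, Matrix.mul_assoc, Matrix.mul_assoc, hU1, Matrix.mul_one,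
    Matrix.diagonal_mul_diagonal, Matrix.trace_diagonal]
  simp [sq]

/-- For `A` symmetric negative definite (all eigenvalues negative)
and `t₁ ≥ t₂`,
`∫_{-∞}^{t₂} |(e^{A t₁} − e^{A t₂}) e^{-A s}|² ds ≤ (Tr(−A)/2)·(t₁ − t₂)²`. -/
theorem stmt3 {m : ℕ} (A : Matrix (Fin m) (Fin m) ℝ) (hA : A.IsHermitian)
    (hneg : ∀ i, hA.eigenvalues i < 0) (t₁ t₂ : ℝ) (h₁₂ : t₂ ≤ t₁) :
    ∫ s in Set.Iic t₂,
        frobNorm ((exp (t₁ • A) - exp (t₂ • A)) * exp ((-s) • A)) ^ 2 ≤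
      (Matrix.trace (-A) / 2) * (t₁ - t₂) ^ 2 := by
  classical
  set μ : Fin m → ℝ := hA.eigenvalues with hμdef
  set U : Matrix (Fin m) (Fin m) ℝ := ↑(hA.eigenvectorUnitary) with hUdef
  have hU1 : star U * U = 1 := Matrix.mem_unitaryGroup_iff'.mp (hA.eigenvectorUnitary).2
  have hU2 : U * star U = 1 := Matrix.mem_unitaryGroup_iff.mp (hA.eigenvectorUnitary).2
  have hcollapse : ∀ X : Matrix (Fin m) (Fin m) ℝ, star U * (U * X) = X := fun X => by
    rw [← Matrix.mul_assoc, hU1, Matrix.one_mul]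
  have spec : A = U * Matrix.diagonal μ * star U := by
    have := hA.spectral_theorem
    simpa [RCLike.ofReal_real_eq_id, Function.comp] using this
  have hexp : ∀ t : ℝ, exp (t • A)
      = U * Matrix.diagonal (fun i => Real.exp (t * μ i)) * star U := by
    intro t
    have hsA : t • A = U * Matrix.diagonal (fun i => t * μ i) * star U := by
      rw [spec]
      rw [show Matrix.diagonal (fun i => t * μ i) = t • Matrix.diagonal μ by
        rw [← Matrix.diagonal_smul]; rfl]
      rw [mul_smul_comm, smul_mul_assoc]
    have hU' : IsUnit U := by
      have hdet : U.det * (star U).det = 1 := by rw [← Matrix.det_mul, hU2, Matrix.det_one]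
      exact (Matrix.isUnit_iff_isUnit_det U).mpr (IsUnit.of_mul_eq_one _ hdet)
    have hinv : U⁻¹ = star U := Matrix.inv_eq_left_inv hU1
    rw [hsA, ← hinv, Matrix.exp_conj U _ hU', Matrix.exp_diagonal, hinv]
    congr 1
    rw [Pi.exp_def]
    funext i
    rw [Real.exp_eq_exp_ℝ]
  -- pointwise identity for the integrand
  have hpt : ∀ s : ℝ,
      frobNorm ((exp (t₁ • A) - exp (t₂ • A)) * exp ((-s) • A)) ^ 2
        = ∑ i, ((Real.exp (t₁ * μ i) - Real.exp (t₂ * μ i)) * Real.exp ((-s) * μ i)) ^ 2 := by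
    intro s
    have h1 : exp (t₁ • A) - exp (t₂ • A)
        = U * Matrix.diagonal (fun i => Real.exp (t₁ * μ i) - Real.exp (t₂ * μ i)) * star U := by
      rw [hexp t₁, hexp t₂, ← Matrix.sub_mul, ← Matrix.mul_sub, Matrix.diagonal_sub]
    have h2 : (U * Matrix.diagonal
          (fun i => Real.exp (t₁ * μ i) - Real.exp (t₂ * μ i)) * star U)
        * (U * Matrix.diagonal (fun i => Real.exp ((-s) * μ i)) * star U)
        = U * Matrix.diagonal
            (fun i => (Real.exp (t₁ * μ i) - Real.exp (t₂ * μ i)) * Real.exp ((-s) * μ i))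
            * star U := by
      simp only [Matrix.mul_assoc, hcollapse]
      rw [← Matrix.mul_assoc (Matrix.diagonal _) (Matrix.diagonal _) (star U),
        Matrix.diagonal_mul_diagonal]
    rw [h1, hexp (-s), h2, frob_sq_conj U hU1]
  -- scalar data
  set c : Fin m → ℝ := fun i => (Real.exp (t₁ * μ i) - Real.exp (t₂ * μ i)) ^ 2 with hc
  set b : Fin m → ℝ := fun i => -2 * μ i with hb
  have hbpos : ∀ i, 0 < b i := fun i => by
    have := hneg i; simp only [hb]; nlinarith
  have hfun : ∀ i s, ((Real.exp (t₁ * μ i) - Real.exp (t₂ * μ i)) * Real.exp ((-s) * μ i)) ^ 2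
      = c i * Real.exp (b i * s) := by
    intro i s
    rw [mul_pow, hc, hb]
    congr 1
    rw [sq, ← Real.exp_add]
    congr 1
    ring
  have hint : ∀ i, IntegrableOn (fun s => c i * Real.exp (b i * s)) (Set.Iic t₂) :=
    fun i => (integrableOn_exp_mul_Iic (hbpos i) t₂).const_mul (c i)
  have termbound : ∀ i, c i * (Real.exp (b i * t₂) / b i) ≤ (-μ i) / 2 * (t₁ - t₂) ^ 2 := by
    intro i
    have hx : (t₁ - t₂) * μ i ≤ 0 :=
      mul_nonpos_iff.mpr (Or.inl ⟨sub_nonneg.mpr h₁₂, (hneg i).le⟩)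
    have hkey : c i * Real.exp (b i * t₂) = (Real.exp ((t₁ - t₂) * μ i) - 1) ^ 2 := by
      have e1 : Real.exp (b i * t₂) = Real.exp (-(μ i) * t₂) ^ 2 := by
        rw [sq, ← Real.exp_add, hb]; congr 1; ring
      rw [hc, e1, ← mul_pow]
      congr 1
      rw [sub_mul, ← Real.exp_add, ← Real.exp_add,
        show t₁ * μ i + -μ i * t₂ = (t₁ - t₂) * μ i by ring,
        show t₂ * μ i + -μ i * t₂ = 0 by ring, Real.exp_zero]
    have hsq : (Real.exp ((t₁ - t₂) * μ i) - 1) ^ 2 ≤ ((t₁ - t₂) * μ i) ^ 2 := by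
      have h1 := Real.add_one_le_exp ((t₁ - t₂) * μ i)
      have h2 : Real.exp ((t₁ - t₂) * μ i) ≤ 1 := Real.exp_le_one_iff.mpr hx
      have := sq_le_sq' (by linarith : -(-((t₁ - t₂) * μ i)) ≤ Real.exp ((t₁ - t₂) * μ i) - 1)
        (by linarith : Real.exp ((t₁ - t₂) * μ i) - 1 ≤ -((t₁ - t₂) * μ i))
      simpa [neg_sq] using this
    rw [← mul_div_assoc, hkey, div_le_iff₀ (hbpos i)]
    calc (Real.exp ((t₁ - t₂) * μ i) - 1) ^ 2 ≤ ((t₁ - t₂) * μ i) ^ 2 := hsq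
      _ = (-μ i) / 2 * (t₁ - t₂) ^ 2 * b i := by rw [hb]; ring
  have htr : Matrix.trace A = ∑ i, μ i := by
    conv_lhs => rw [spec]
    rw [Matrix.trace_mul_cycle, hU1, Matrix.one_mul, Matrix.trace_diagonal]
  calc ∫ s in Set.Iic t₂,
        frobNorm ((exp (t₁ • A) - exp (t₂ • A)) * exp ((-s) • A)) ^ 2
      = ∫ s in Set.Iic t₂, ∑ i, c i * Real.exp (b i * s) := by
        simp only [hpt, hfun]
    _ = ∑ i, ∫ s in Set.Iic t₂, c i * Real.exp (b i * s) :=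
        integral_finset_sum _ (fun i _ => hint i)
    _ = ∑ i, c i * (Real.exp (b i * t₂) / b i) := by
        refine Finset.sum_congr rfl fun i _ => ?_
        rw [MeasureTheory.integral_const_mul, integral_exp_mul_Iic (hbpos i)]
    _ ≤ ∑ i, (-μ i) / 2 * (t₁ - t₂) ^ 2 := Finset.sum_le_sum fun i _ => termbound i
    _ = (Matrix.trace (-A) / 2) * (t₁ - t₂) ^ 2 := by
        rw [Matrix.trace_neg, htr, ← Finset.sum_mul, ← Finset.sum_div, ← Finset.sum_neg_distrib]
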